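/- Let (U,V,W,X,Y,Z) be finitely-valued random variables with (U,V,W) → X → (Y,Z) a Markov chain and |range(X)| = 2. Assume the inequality I(U';Y) + I(V';Z) - I(U';V') ≤ max{I(X;Y), I(X;Z)} holds conditionally on every value w of W (applied to the conditional distributions given W = w). If for every w, I(X;Y | W=w) ≥ I(X;Z | W=w), then min{I(W;Y), I(W;Z)} + I(U;Y|W) + I(V;Z|W) - I(U;V|W) ≤ I(X;Y). -/

import Mathlib

open scoped Classical BigOperators

noncomputable section

/-- `p` is a probability mass function on the finite sample space `Ω`. -/
def IsPMF {Ω : Type*} [Fintype Ω] (p : Ω → ℝ) : Prop :=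
  (∀ ω, 0 ≤ p ω) ∧ ∑ ω, p ω = 1

/-- Probability of the event `E` under the mass function `p`. -/
def prob {Ω : Type*} [Fintype Ω] (p : Ω → ℝ) (E : Ω → Prop) : ℝ :=
  ∑ ω, if E ω then p ω else 0

/-- Shannon entropy of the random variable `f` under `p` (natural logarithm,
with the convention `0 * log 0 = 0`, automatic since `Real.log 0 = 0`). -/
def entropy {Ω α : Type*} [Fintype Ω] [Fintype α] (p : Ω → ℝ) (f : Ω → α) : ℝ :=
  -∑ a, prob p (fun ω => f ω = a) * Real.log (prob p (fun ω => f ω = a))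

/-- Shannon mutual information `I(f;g)` under `p`. -/
def mutInfo {Ω α β : Type*} [Fintype Ω] [Fintype α] [Fintype β]
    (p : Ω → ℝ) (f : Ω → α) (g : Ω → β) : ℝ :=
  entropy p f + entropy p g - entropy p (fun ω => (f ω, g ω))

/-- Conditional Shannon entropy `H(f | g)`. -/
def condEntropy {Ω α β : Type*} [Fintype Ω] [Fintype α] [Fintype β]
    (p : Ω → ℝ) (f : Ω → α) (g : Ω → β) : ℝ :=
  entropy p (fun ω => (f ω, g ω)) - entropy p g

/-- The Markov chain `A → X → C`: `A` and `C` are conditionally independent given `X`. -/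
def Markov {Ω α β γ : Type*} [Fintype Ω] [Fintype α] [Fintype β] [Fintype γ]
    (p : Ω → ℝ) (A : Ω → α) (X : Ω → β) (C : Ω → γ) : Prop :=
  ∀ a x c,
    prob p (fun ω => A ω = a ∧ X ω = x ∧ C ω = c) * prob p (fun ω => X ω = x) =
      prob p (fun ω => A ω = a ∧ X ω = x) * prob p (fun ω => X ω = x ∧ C ω = c)

/-- The conditional probability mass function given the event `E`. -/
def condPMF {Ω : Type*} [Fintype Ω] (p : Ω → ℝ) (E : Ω → Prop) : Ω → ℝ :=
  fun ω => if E ω then p ω / prob p E else 0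

/-- Conditional mutual information `I(f;g | W) = ∑_w P(W=w) I(f;g | W=w)`. -/
def condMutInfo {Ω α β γ : Type*} [Fintype Ω] [Fintype α] [Fintype β] [Fintype γ]
    (p : Ω → ℝ) (f : Ω → α) (g : Ω → β) (W : Ω → γ) : ℝ :=
  ∑ w, prob p (fun ω => W ω = w) * mutInfo (condPMF p (fun ω => W ω = w)) f g

section aux
variable {Ω : Type*} [Fintype Ω] (p : Ω → ℝ)

lemma prob_congr' {E F : Ω → Prop} (h : ∀ ω, E ω ↔ F ω) : prob p E = prob p F :=
  Finset.sum_congr rfl fun ω _ => by rw [h ω]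

lemma prob_empty {E : Ω → Prop} (h : ∀ ω, ¬ E ω) : prob p E = 0 := by
  unfold prob; simp [h]

lemma prob_nonneg (hp : ∀ ω, 0 ≤ p ω) (E : Ω → Prop) : 0 ≤ prob p E :=
  Finset.sum_nonneg fun ω _ => by by_cases h : E ω <;> simp [h, hp ω]

lemma prob_mono (hp : ∀ ω, 0 ≤ p ω) {E F : Ω → Prop} (h : ∀ ω, E ω → F ω) :
    prob p E ≤ prob p F := by
  refine Finset.sum_le_sum fun ω _ => ?_
  by_cases hE : E ω
  · simp [hE, h ω hE]
  · simp only [hE, if_false]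
    split
    · exact hp ω
    · exact le_refl 0

lemma sum_prob_fiber {α : Type*} [Fintype α] (f : Ω → α) (E : Ω → Prop) :
    ∑ a, prob p (fun ω => f ω = a ∧ E ω) = prob p E := by
  unfold prob
  rw [Finset.sum_comm]
  refine Finset.sum_congr rfl fun ω _ => ?_
  by_cases hE : E ω
  · simp [hE]
  · simp [hE]

lemma sum_prob_fiber' {α : Type*} [Fintype α] (f : Ω → α) (E : Ω → Prop) (G : α → Ω → Prop)
    (h : ∀ a ω, G a ω ↔ (f ω = a ∧ E ω)) : ∑ a, prob p (G a) = prob p E := by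
  calc ∑ a, prob p (G a) = ∑ a, prob p (fun ω => f ω = a ∧ E ω) :=
        Finset.sum_congr rfl fun a _ => prob_congr' p (h a)
    _ = prob p E := sum_prob_fiber p f E

lemma prob_condPMF (E F : Ω → Prop) :
    prob (condPMF p E) F = prob p (fun ω => F ω ∧ E ω) / prob p E := by
  unfold prob condPMF
  rw [Finset.sum_div]
  refine Finset.sum_congr rfl fun ω _ => ?_
  by_cases hF : F ω <;> by_cases hE : E ω <;> simp [hF, hE, prob]

lemma prob_and_eq_zero (hp0 : ∀ ω, 0 ≤ p ω) {E : Ω → Prop} (h : prob p E = 0) (F : Ω → Prop) :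
    prob p (fun ω => F ω ∧ E ω) = 0 :=
  le_antisymm (h ▸ prob_mono p hp0 fun ω hh => hh.2) (prob_nonneg p hp0 _)

lemma entropy_comp {α β : Type*} [Fintype α] [Fintype β] (f : Ω → α) (e : α → β)
    (he : Function.Injective e) :
    entropy p (fun ω => e (f ω)) = entropy p f := by
  unfold entropy
  congr 1
  set φ : β → ℝ := fun b => prob p (fun ω => e (f ω) = b) *
      Real.log (prob p (fun ω => e (f ω) = b)) with hφ
  calc ∑ b, φ b = ∑ b ∈ Finset.univ.image e, φ b := by
        refine (Finset.sum_subset (Finset.subset_univ _) ?_).symm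
        intro b _ hb
        have h0 : prob p (fun ω => e (f ω) = b) = 0 := by
          apply prob_empty
          intro ω hω
          exact hb (Finset.mem_image.2 ⟨f ω, Finset.mem_univ _, hω⟩)
        simp [hφ, h0]
    _ = ∑ a, φ (e a) := Finset.sum_image (fun a _ b _ h => he h)
    _ = ∑ a, (prob p fun ω => f ω = a) * Real.log (prob p fun ω => f ω = a) := by
        refine Finset.sum_congr rfl fun a _ => ?_
        have h1 : prob p (fun ω => e (f ω) = e a) = prob p (fun ω => f ω = a) :=
          prob_congr' p fun ω => he.eq_iff
        simp only [hφ, h1]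

lemma sum_condEntropy {α γ : Type*} [Fintype α] [Fintype γ] (hp0 : ∀ ω, 0 ≤ p ω)
    (f : Ω → α) (W : Ω → γ) :
    ∑ w, prob p (fun ω => W ω = w) * entropy (condPMF p (fun ω => W ω = w)) f
      = entropy p (fun ω => (f ω, W ω)) - entropy p W := by
  have step : ∀ w, prob p (fun ω => W ω = w) * entropy (condPMF p (fun ω => W ω = w)) f
      = -∑ a, prob p (fun ω => f ω = a ∧ W ω = w) *
            Real.log (prob p (fun ω => f ω = a ∧ W ω = w))
        + prob p (fun ω => W ω = w) * Real.log (prob p (fun ω => W ω = w)) := by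
    intro w
    set c := prob p (fun ω => W ω = w) with hc
    set r := fun a => prob p (fun ω => f ω = a ∧ W ω = w) with hr
    have hprob : ∀ a, prob (condPMF p (fun ω => W ω = w)) (fun ω => f ω = a) = r a / c :=
      fun a => prob_condPMF p _ _
    by_cases h0 : c = 0
    · have hra : ∀ a, prob p (fun ω => f ω = a ∧ W ω = w) = 0 :=
        fun a => prob_and_eq_zero p hp0 h0 _
      simp [entropy, h0, hprob, hr, hra]
    · have key : ∀ a, c * ((r a / c) * Real.log (r a / c))
          = r a * Real.log (r a) - r a * Real.log c := by
        intro a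
        by_cases hra : r a = 0
        · simp [hra]
        · rw [Real.log_div hra h0]
          field_simp
      have hsum : ∑ a, r a = c := sum_prob_fiber p f _
      calc c * entropy (condPMF p (fun ω => W ω = w)) f
          = -∑ a, c * ((r a / c) * Real.log (r a / c)) := by
            rw [entropy]
            simp only [hprob]
            rw [← Finset.mul_sum]
            ring
        _ = -∑ a, (r a * Real.log (r a) - r a * Real.log c) := by
            exact congrArg Neg.neg (Finset.sum_congr rfl fun a _ => key a)
        _ = -∑ a, r a * Real.log (r a) + (∑ a, r a) * Real.log c := by
            rw [Finset.sum_sub_distrib, ← Finset.sum_mul]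
            ring
        _ = _ := by rw [hsum]
  have hpair : entropy p (fun ω => (f ω, W ω))
      = -∑ a, ∑ w, prob p (fun ω => f ω = a ∧ W ω = w) *
          Real.log (prob p (fun ω => f ω = a ∧ W ω = w)) := by
    rw [entropy, Fintype.sum_prod_type]
    congr 1
    refine Finset.sum_congr rfl fun a _ => Finset.sum_congr rfl fun w _ => ?_
    have : prob p (fun ω => (f ω, W ω) = (a, w)) = prob p (fun ω => f ω = a ∧ W ω = w) :=
      prob_congr' p fun ω => by simp [Prod.ext_iff]
    rw [this]
  calc ∑ w, prob p (fun ω => W ω = w) * entropy (condPMF p (fun ω => W ω = w)) f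
      = ∑ w, (-∑ a, prob p (fun ω => f ω = a ∧ W ω = w) *
            Real.log (prob p (fun ω => f ω = a ∧ W ω = w))
        + prob p (fun ω => W ω = w) * Real.log (prob p (fun ω => W ω = w))) :=
        Finset.sum_congr rfl fun w _ => step w
    _ = -∑ w, ∑ a, prob p (fun ω => f ω = a ∧ W ω = w) *
            Real.log (prob p (fun ω => f ω = a ∧ W ω = w))
        + ∑ w, prob p (fun ω => W ω = w) * Real.log (prob p (fun ω => W ω = w)) := by
        rw [Finset.sum_add_distrib, Finset.sum_neg_distrib]
    _ = entropy p (fun ω => (f ω, W ω)) - entropy p W := by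
        rw [hpair, Finset.sum_comm, entropy]
        ring

lemma mul_log_mul (x y : ℝ) :
    x * y * Real.log (x * y) = (x * Real.log x) * y + x * (y * Real.log y) := by
  rcases eq_or_ne x 0 with hx | hx
  · simp [hx]
  rcases eq_or_ne y 0 with hy | hy
  · simp [hy]
  rw [Real.log_mul hx hy]
  ring

lemma mutInfo_indep {α β : Type*} [Fintype α] [Fintype β] (q : Ω → ℝ) (f : Ω → α) (g : Ω → β)
    (hsf : ∑ a, prob q (fun ω => f ω = a) = 1)
    (hsg : ∑ b, prob q (fun ω => g ω = b) = 1)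
    (hind : ∀ a b, prob q (fun ω => (f ω, g ω) = (a, b)) =
        prob q (fun ω => f ω = a) * prob q (fun ω => g ω = b)) :
    mutInfo q f g = 0 := by
  have hpair : entropy q (fun ω => (f ω, g ω)) = entropy q f + entropy q g := by
    rw [entropy, Fintype.sum_prod_type]
    have : ∀ a b, prob q (fun ω => (f ω, g ω) = (a, b)) *
        Real.log (prob q (fun ω => (f ω, g ω) = (a, b)))
        = (prob q (fun ω => f ω = a) * Real.log (prob q (fun ω => f ω = a)))
            * prob q (fun ω => g ω = b)
          + prob q (fun ω => f ω = a) *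
            (prob q (fun ω => g ω = b) * Real.log (prob q (fun ω => g ω = b))) := by
      intro a b
      rw [hind a b]
      exact mul_log_mul _ _
    calc -∑ a, ∑ b, prob q (fun ω => (f ω, g ω) = (a, b)) *
          Real.log (prob q (fun ω => (f ω, g ω) = (a, b)))
        = -∑ a, ∑ b, ((prob q (fun ω => f ω = a) * Real.log (prob q (fun ω => f ω = a)))
            * prob q (fun ω => g ω = b)
          + prob q (fun ω => f ω = a) *
            (prob q (fun ω => g ω = b) * Real.log (prob q (fun ω => g ω = b)))) := by
          exact congrArg Neg.neg (Finset.sum_congr rfl fun a _ =>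
            Finset.sum_congr rfl fun b _ => this a b)
      _ = entropy q f + entropy q g := by
          simp only [Finset.sum_add_distrib, ← Finset.sum_mul, ← Finset.mul_sum]
          rw [hsf, hsg, entropy, entropy]
          ring
  rw [mutInfo, hpair]
  ring

lemma condMutInfo_eq {α β γ : Type*} [Fintype α] [Fintype β] [Fintype γ] (hp0 : ∀ ω, 0 ≤ p ω)
    (f : Ω → α) (g : Ω → β) (W : Ω → γ) :
    condMutInfo p f g W = entropy p (fun ω => (f ω, W ω)) + entropy p (fun ω => (g ω, W ω))
      - entropy p (fun ω => ((f ω, g ω), W ω)) - entropy p W := by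
  have h1 := sum_condEntropy p hp0 f W
  have h2 := sum_condEntropy p hp0 g W
  have h3 := sum_condEntropy p hp0 (fun ω => (f ω, g ω)) W
  rw [condMutInfo]
  simp only [mutInfo, mul_add, mul_sub]
  rw [Finset.sum_sub_distrib, Finset.sum_add_distrib, h1, h2, h3]
  ring

lemma entropy_swap {α β : Type*} [Fintype α] [Fintype β] (f : Ω → α) (g : Ω → β) :
    entropy p (fun ω => (f ω, g ω)) = entropy p (fun ω => (g ω, f ω)) := by
  have h := entropy_comp p (fun ω => (g ω, f ω)) Prod.swap Prod.swap_injective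
  simpa using h

end aux

/-- If `(U,V,W) → X → (Y,Z)` is Markov with binary `X`, the inequality
`I(U;Y) + I(V;Z) - I(U;V) ≤ max{I(X;Y), I(X;Z)}` holds under each conditional
distribution given `W = w`, and `I(X;Y|W=w) ≥ I(X;Z|W=w)` for every such `w`,
then `min{I(W;Y), I(W;Z)} + I(U;Y|W) + I(V;Z|W) - I(U;V|W) ≤ I(X;Y)`. -/
theorem stmt18 {Ω αU αV αW χ αY αZ : Type*} [Fintype Ω] [Fintype αU] [Fintype αV]
    [Fintype αW] [Fintype χ] [Fintype αY] [Fintype αZ]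
    (p : Ω → ℝ) (hp : IsPMF p)
    (U : Ω → αU) (V : Ω → αV) (W : Ω → αW) (X : Ω → χ) (Y : Ω → αY) (Z : Ω → αZ)
    (hcard : Fintype.card χ = 2)
    (hM : Markov p (fun ω => (U ω, V ω, W ω)) X (fun ω => (Y ω, Z ω)))
    (hcond : ∀ w, prob p (fun ω => W ω = w) ≠ 0 →
      mutInfo (condPMF p (fun ω => W ω = w)) U Y +
          mutInfo (condPMF p (fun ω => W ω = w)) V Z -
          mutInfo (condPMF p (fun ω => W ω = w)) U V ≤
        max (mutInfo (condPMF p (fun ω => W ω = w)) X Y)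
          (mutInfo (condPMF p (fun ω => W ω = w)) X Z))
    (hYZ : ∀ w, prob p (fun ω => W ω = w) ≠ 0 →
      mutInfo (condPMF p (fun ω => W ω = w)) X Z ≤
        mutInfo (condPMF p (fun ω => W ω = w)) X Y) :
    min (mutInfo p W Y) (mutInfo p W Z) + condMutInfo p U Y W +
        condMutInfo p V Z W - condMutInfo p U V W ≤ mutInfo p X Y := by
  obtain ⟨hp0, hp1⟩ := hp
  -- Step 1: summed conditional inequality
  have hcM : condMutInfo p U Y W + condMutInfo p V Z W - condMutInfo p U V W
      ≤ condMutInfo p X Y W := by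
    unfold condMutInfo
    rw [← Finset.sum_add_distrib, ← Finset.sum_sub_distrib]
    refine Finset.sum_le_sum fun w _ => ?_
    by_cases h0 : prob p (fun ω => W ω = w) = 0
    · simp [h0]
    · have hle := hcond w h0
      rw [max_eq_left (hYZ w h0)] at hle
      have hnn := prob_nonneg p hp0 (fun ω => W ω = w)
      have h2 := mul_le_mul_of_nonneg_left hle hnn
      rw [mul_sub, mul_add] at h2
      exact h2
  -- Step 2: Markov marginalization
  have key : ∀ w x y, prob p (fun ω => W ω = w ∧ X ω = x ∧ Y ω = y) * prob p (fun ω => X ω = x)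
      = prob p (fun ω => W ω = w ∧ X ω = x) * prob p (fun ω => X ω = x ∧ Y ω = y) := by
    intro w x y
    have Aeq : ∑ u, ∑ v, ∑ z,
        prob p (fun ω => (U ω, V ω, W ω) = (u, v, w) ∧ X ω = x ∧ (Y ω, Z ω) = (y, z))
          = prob p (fun ω => W ω = w ∧ X ω = x ∧ Y ω = y) := by
      have inner : ∀ u v, ∑ z,
          prob p (fun ω => (U ω, V ω, W ω) = (u, v, w) ∧ X ω = x ∧ (Y ω, Z ω) = (y, z))
            = prob p (fun ω => U ω = u ∧ V ω = v ∧ W ω = w ∧ X ω = x ∧ Y ω = y) := by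
        intro u v
        refine sum_prob_fiber' p Z _ _ fun z ω => ?_
        simp only [Prod.ext_iff]
        tauto
      have inner2 : ∀ u, ∑ v,
          prob p (fun ω => U ω = u ∧ V ω = v ∧ W ω = w ∧ X ω = x ∧ Y ω = y)
            = prob p (fun ω => U ω = u ∧ W ω = w ∧ X ω = x ∧ Y ω = y) := by
        intro u
        refine sum_prob_fiber' p V _ _ fun v ω => ?_
        tauto
      calc ∑ u, ∑ v, ∑ z,
          prob p (fun ω => (U ω, V ω, W ω) = (u, v, w) ∧ X ω = x ∧ (Y ω, Z ω) = (y, z))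
          = ∑ u, ∑ v, prob p (fun ω => U ω = u ∧ V ω = v ∧ W ω = w ∧ X ω = x ∧ Y ω = y) :=
            Finset.sum_congr rfl fun u _ => Finset.sum_congr rfl fun v _ => inner u v
        _ = ∑ u, prob p (fun ω => U ω = u ∧ W ω = w ∧ X ω = x ∧ Y ω = y) :=
            Finset.sum_congr rfl fun u _ => inner2 u
        _ = prob p (fun ω => W ω = w ∧ X ω = x ∧ Y ω = y) :=
            sum_prob_fiber' p U _ _ fun u ω => by tauto
    have Beq : ∑ u, ∑ v, prob p (fun ω => (U ω, V ω, W ω) = (u, v, w) ∧ X ω = x)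
        = prob p (fun ω => W ω = w ∧ X ω = x) := by
      have inner : ∀ u, ∑ v, prob p (fun ω => (U ω, V ω, W ω) = (u, v, w) ∧ X ω = x)
          = prob p (fun ω => U ω = u ∧ W ω = w ∧ X ω = x) := by
        intro u
        refine sum_prob_fiber' p V _ _ fun v ω => ?_
        simp only [Prod.ext_iff]
        tauto
      calc ∑ u, ∑ v, prob p (fun ω => (U ω, V ω, W ω) = (u, v, w) ∧ X ω = x)
          = ∑ u, prob p (fun ω => U ω = u ∧ W ω = w ∧ X ω = x) :=
            Finset.sum_congr rfl fun u _ => inner u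
        _ = prob p (fun ω => W ω = w ∧ X ω = x) :=
            sum_prob_fiber' p U _ _ fun u ω => by tauto
    have Ceq : ∑ z, prob p (fun ω => X ω = x ∧ (Y ω, Z ω) = (y, z))
        = prob p (fun ω => X ω = x ∧ Y ω = y) := by
      refine sum_prob_fiber' p Z _ _ fun z ω => ?_
      simp only [Prod.ext_iff]
      tauto
    calc prob p (fun ω => W ω = w ∧ X ω = x ∧ Y ω = y) * prob p (fun ω => X ω = x)
        = (∑ u, ∑ v, ∑ z,
            prob p (fun ω => (U ω, V ω, W ω) = (u, v, w) ∧ X ω = x ∧ (Y ω, Z ω) = (y, z)))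
            * prob p (fun ω => X ω = x) := by rw [Aeq]
      _ = ∑ u, ∑ v, ∑ z,
            prob p (fun ω => (U ω, V ω, W ω) = (u, v, w) ∧ X ω = x ∧ (Y ω, Z ω) = (y, z))
            * prob p (fun ω => X ω = x) := by simp only [Finset.sum_mul]
      _ = ∑ u, ∑ v, ∑ z,
            prob p (fun ω => (U ω, V ω, W ω) = (u, v, w) ∧ X ω = x)
            * prob p (fun ω => X ω = x ∧ (Y ω, Z ω) = (y, z)) :=
          Finset.sum_congr rfl fun u _ => Finset.sum_congr rfl fun v _ =>
            Finset.sum_congr rfl fun z _ => hM (u, v, w) x (y, z)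
      _ = (∑ u, ∑ v, prob p (fun ω => (U ω, V ω, W ω) = (u, v, w) ∧ X ω = x))
            * (∑ z, prob p (fun ω => X ω = x ∧ (Y ω, Z ω) = (y, z))) := by
          simp only [← Finset.mul_sum, ← Finset.sum_mul]
      _ = prob p (fun ω => W ω = w ∧ X ω = x) * prob p (fun ω => X ω = x ∧ Y ω = y) := by
          rw [Beq, Ceq]
  -- Step 3: I(W;Y|X) = 0
  have hI0 : condMutInfo p W Y X = 0 := by
    rw [condMutInfo]
    refine Finset.sum_eq_zero fun x _ => ?_
    by_cases h0 : prob p (fun ω => X ω = x) = 0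
    · simp [h0]
    · have hmi : mutInfo (condPMF p (fun ω => X ω = x)) W Y = 0 := by
        refine mutInfo_indep _ W Y ?_ ?_ ?_
        · simp only [prob_condPMF]
          rw [← Finset.sum_div, sum_prob_fiber, div_self h0]
        · simp only [prob_condPMF]
          rw [← Finset.sum_div, sum_prob_fiber, div_self h0]
        · intro w y
          rw [prob_condPMF, prob_condPMF, prob_condPMF]
          have e1 : prob p (fun ω => (W ω, Y ω) = (w, y) ∧ X ω = x)
              = prob p (fun ω => W ω = w ∧ X ω = x ∧ Y ω = y) := by
            refine prob_congr' p fun ω => ?_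
            simp only [Prod.ext_iff]
            tauto
          have e2 : prob p (fun ω => Y ω = y ∧ X ω = x)
              = prob p (fun ω => X ω = x ∧ Y ω = y) :=
            prob_congr' p fun ω => by tauto
          rw [e1, e2, div_mul_div_comm,
            div_eq_div_iff h0 (mul_ne_zero h0 h0)]
          linear_combination (key w x y) * prob p (fun ω => X ω = x)
      rw [hmi, mul_zero]
  -- Step 4: chain rule I(W;Y) + I(X;Y|W) = I(X;Y)
  have hT1 : entropy p (fun ω => ((W ω, Y ω), X ω)) = entropy p (fun ω => (W ω, X ω, Y ω)) :=
    entropy_comp p (fun ω => (W ω, X ω, Y ω)) (fun t => ((t.1, t.2.2), t.2.1))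
      (by rintro ⟨a1, a2, a3⟩ ⟨b1, b2, b3⟩ h; simp_all [Prod.ext_iff])
  have hT2 : entropy p (fun ω => ((X ω, Y ω), W ω)) = entropy p (fun ω => (W ω, X ω, Y ω)) :=
    entropy_comp p (fun ω => (W ω, X ω, Y ω)) (fun t => ((t.2.1, t.2.2), t.1))
      (by rintro ⟨a1, a2, a3⟩ ⟨b1, b2, b3⟩ h; simp_all [Prod.ext_iff])
  have s1 : entropy p (fun ω => (Y ω, W ω)) = entropy p (fun ω => (W ω, Y ω)) :=
    entropy_swap p Y W
  have s2 : entropy p (fun ω => (W ω, X ω)) = entropy p (fun ω => (X ω, W ω)) :=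
    entropy_swap p W X
  have s3 : entropy p (fun ω => (Y ω, X ω)) = entropy p (fun ω => (X ω, Y ω)) :=
    entropy_swap p Y X
  rw [condMutInfo_eq p hp0 W Y X] at hI0
  have hchain : mutInfo p W Y + condMutInfo p X Y W = mutInfo p X Y := by
    rw [condMutInfo_eq p hp0 X Y W, mutInfo, mutInfo]
    linarith [hI0, hT1, hT2, s1, s2, s3]
  have hmin : min (mutInfo p W Y) (mutInfo p W Z) ≤ mutInfo p W Y := min_le_left _ _
  linarith [hcM, hchain, hmin]
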